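/- Let A be a monoid with zero, let k be a commutative ring, and let M and N be types with zero carrying MulActionWithZero A actions (a • 0 = 0, 0 • m = 0, 1 • m = m, (a*b) • m = a • (b • m)). For a ∈ A, let T^M_a be the k-linear endomorphism of the free module {m : M // m ≠ 0} →₀ k sending the basis vector at m to the basis vector at a • m if a • m ≠ 0 and to 0 otherwise; define T^N_a likewise, and let T^{M∧N}_a be the k-linear endomorphism of ({m : M // m ≠ 0} × {n : N // n ≠ 0}) →₀ k sending the basis vector at (m, n) to the basis vector at (a • m, a • n) if both a • m ≠ 0 and a • n ≠ 0, and to 0 otherwise. Then under the canonical k-linear equivalence (({m // m ≠ 0} →₀ k) ⊗[k] ({n // n ≠ 0} →₀ k)) ≃ (({m // m ≠ 0} × {n // n ≠ 0}) →₀ k) (finsuppTensorFinsupp'), the map T^M_a ⊗ T^N_a corresponds to T^{M∧N}_a. (The base-change functor − ⊗_{F₁} k is monoidal: (M ∧ N) ⊗_{F₁} k ≅ (M ⊗_{F₁} k) ⊗_k (N ⊗_{F₁} k) as k[A]-modules.) -/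
import Mathlib


/-- **Proposition (the base-change functor `− ⊗_{F₁} k` is monoidal).**
Let `A` be a monoid with zero, `k` a commutative ring, and `M`, `N` pointed
`A`-modules (types with zero and a `MulActionWithZero A` action).  For `a ∈ A`,
let `TM`, `TN`, `TMN` be the `k`-linear structure maps induced by `a` on the free
`k`-modules on the nonzero elements of `M`, `N` and of the smash product `M ∧ N`
respectively.  Then under the canonical equivalence `finsuppTensorFinsupp'`, the
map `TM ⊗ TN` corresponds to `TMN`:
`(M ∧ N) ⊗_{F₁} k ≅ (M ⊗_{F₁} k) ⊗_k (N ⊗_{F₁} k)` as `k[A]`-modules. -/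
theorem base_change_monoidal {A M N k : Type*} [MonoidWithZero A] [CommRing k]
    [Zero M] [MulActionWithZero A M] [Zero N] [MulActionWithZero A N]
    [DecidableEq M] [DecidableEq N] (a : A)
    (TM : ({m : M // m ≠ 0} →₀ k) →ₗ[k] ({m : M // m ≠ 0} →₀ k))
    (hTM : ∀ m : {m : M // m ≠ 0}, TM (Finsupp.single m 1) =
      if h : a • (m : M) ≠ 0 then Finsupp.single ⟨a • (m : M), h⟩ 1 else 0)
    (TN : ({n : N // n ≠ 0} →₀ k) →ₗ[k] ({n : N // n ≠ 0} →₀ k))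
    (hTN : ∀ n : {n : N // n ≠ 0}, TN (Finsupp.single n 1) =
      if h : a • (n : N) ≠ 0 then Finsupp.single ⟨a • (n : N), h⟩ 1 else 0)
    (TMN : (({m : M // m ≠ 0} × {n : N // n ≠ 0}) →₀ k) →ₗ[k]
      (({m : M // m ≠ 0} × {n : N // n ≠ 0}) →₀ k))
    (hTMN : ∀ p : {m : M // m ≠ 0} × {n : N // n ≠ 0},
      TMN (Finsupp.single p 1) =
        if h : a • (p.1 : M) ≠ 0 ∧ a • (p.2 : N) ≠ 0
        then Finsupp.single (⟨a • (p.1 : M), h.1⟩, ⟨a • (p.2 : N), h.2⟩) 1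
        else 0) :
    TMN.comp
        (finsuppTensorFinsupp' k {m : M // m ≠ 0} {n : N // n ≠ 0}).toLinearMap =
      (finsuppTensorFinsupp' k {m : M // m ≠ 0} {n : N // n ≠ 0}).toLinearMap.comp
        (TensorProduct.map TM TN) := by
  apply TensorProduct.ext
  apply Finsupp.lhom_ext'
  intro m
  apply LinearMap.ext_ring
  apply Finsupp.lhom_ext'
  intro n
  apply LinearMap.ext_ring
  simp only [LinearMap.coe_comp, Function.comp_apply, TensorProduct.mk_apply,
    LinearMap.compr₂_apply, TensorProduct.map_tmul,
    LinearEquiv.coe_coe, finsuppTensorFinsupp'_single_tmul_single, one_mul,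
    hTM, hTN, hTMN]
  by_cases hm : a • (m : M) ≠ 0 <;> by_cases hn : a • (n : N) ≠ 0 <;>
    simp [hTM, hTN, hTMN, hm, hn, finsuppTensorFinsupp'_single_tmul_single, map_zero] <;> exact (LinearEquiv.map_zero _).symm
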